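/- Let G = (V,E) be a finite non-bipartite simple graph of odd girth 2ρ−1 (ρ ≥ 2 an integer) and let v_p ∈ V be such that G∖v_p is bipartite. Then the fractional chromatic number of G equals 2 + 1/(ρ−1), i.e. χ^f(G) = (2ρ−1)/(ρ−1). -/

import Mathlib

open Finset

/-- `C` is a vertex cover of `G`. -/
def IsVC {V : Type*} (G : SimpleGraph V) (C : Finset V) : Prop :=
  ∀ ⦃u v : V⦄, G.Adj u v → u ∈ C ∨ v ∈ C

/-- `OPT G w` : minimum weight of a vertex cover of `G`. -/
noncomputable def OPT {V : Type*} [Fintype V] (G : SimpleGraph V) (w : V → ℝ) : ℝ :=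
  sInf {t : ℝ | ∃ C : Finset V, IsVC G C ∧ t = ∑ v ∈ C, w v}

/-- `LPval G w` : optimal value of the standard vertex cover LP relaxation. -/
noncomputable def LPval {V : Type*} [Fintype V] (G : SimpleGraph V) (w : V → ℝ) : ℝ :=
  sInf {t : ℝ | ∃ x : V → ℝ, (∀ v, 0 ≤ x v) ∧ (∀ ⦃u v : V⦄, G.Adj u v → 1 ≤ x u + x v) ∧
    t = ∑ v, w v * x v}

/-- The graph `G ∖ S` (vertices of `S` kept as isolated vertices). -/
def Gdel {V : Type*} (G : SimpleGraph V) (S : Set V) : SimpleGraph V :=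
  SimpleGraph.fromRel (fun u v => G.Adj u v ∧ u ∉ S ∧ v ∉ S)

open scoped Classical in
/-- Sum of `y` over the set of edges described by `P`. -/
noncomputable def ysum {V : Type*} [Fintype V] [DecidableEq V]
    (y : Sym2 V → ℝ) (P : Sym2 V → Prop) : ℝ :=
  ∑ e : Sym2 V, if P e then y e else 0

/-- `y` is a dual certificate for `w` : a feasible dual solution with `y(δ(v)) = w v`. -/
def IsDualCert {V : Type*} [Fintype V] [DecidableEq V] (G : SimpleGraph V)
    (w : V → ℝ) (y : Sym2 V → ℝ) : Prop :=
  (∀ e, 0 ≤ y e) ∧ (∀ e, e ∉ G.edgeSet → y e = 0) ∧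
    ∀ v : V, ysum y (fun e => e ∈ G.edgeSet ∧ v ∈ e) = w v

/-- Membership in the polytope `Q^W`. -/
def memQW {V : Type*} [Fintype V] [DecidableEq V] (G : SimpleGraph V) (w : V → ℝ) : Prop :=
  (∀ v, 0 ≤ w v) ∧ (∑ v, w v) = 2 ∧ ∃ y : Sym2 V → ℝ, IsDualCert G w y

/-- `G` has odd girth `n` : it contains an odd cycle of length `n` and no shorter one. -/
def HasOddGirth {V : Type*} (G : SimpleGraph V) (n : ℕ) : Prop :=
  Odd n ∧ (∃ (v : V) (c : G.Walk v v), c.IsCycle ∧ c.length = n) ∧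
    ∀ (v : V) (c : G.Walk v v), c.IsCycle → Odd c.length → n ≤ c.length

/-- The contraction `G / S` of the vertex set `S` to a single new vertex `none`. -/
def contract {V : Type*} (G : SimpleGraph V) (S : Set V) :
    SimpleGraph (Option {v : V // v ∉ S}) :=
  SimpleGraph.fromRel (fun x y =>
    match x, y with
    | some u, some v => G.Adj u.1 v.1
    | some u, none => ∃ s ∈ S, G.Adj u.1 s
    | none, _ => False)

/-- `I` is an independent set of `G`. -/
def IsIndep {V : Type*} (G : SimpleGraph V) (I : Finset V) : Prop :=
  ∀ ⦃u⦄, u ∈ I → ∀ ⦃v⦄, v ∈ I → ¬ G.Adj u v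

/-- The fractional chromatic number of `G`. -/
noncomputable def fracChrom {V : Type*} [Fintype V] [DecidableEq V] (G : SimpleGraph V) : ℝ :=
  sInf {t : ℝ | ∃ y : Finset V → ℝ, (∀ I, 0 ≤ y I) ∧ (∀ I, ¬ IsIndep G I → y I = 0) ∧
    (∀ v : V, 1 ≤ ∑ I : Finset V, if v ∈ I then y I else 0) ∧ t = ∑ I : Finset V, y I}


section AuxProof

open SimpleGraph Walk

open SimpleGraph Walk

variable {V : Type*} [DecidableEq V] {G : SimpleGraph V}

lemma path_edge_aux {y v : V} {p : G.Walk y v} (hp : p.IsPath) (he : s(v,y) ∈ p.edges) :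
    p.length = 1 := by
  cases p with
  | nil => simp at he
  | @cons _ z _ h' q =>
    rw [Walk.edges_cons, List.mem_cons] at he
    rcases he with he | he
    · rw [Sym2.eq_iff] at he
      rcases he with ⟨rfl, rfl⟩ | ⟨rfl, -⟩
      · exact absurd rfl h'.ne'
      · have hq : q.IsPath := hp.of_cons
        have : (⟨q, hq⟩ : G.Path _ _) = SimpleGraph.Path.nil := SimpleGraph.Path.loop_eq _
        have hq0 : q = Walk.nil := congrArg Subtype.val this
        simp [hq0]
    · have hy : y ∈ q.support := q.snd_mem_support_of_mem_edges he
      have := hp.support_nodup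
      rw [Walk.support_cons, List.nodup_cons] at this
      exact absurd hy this.1

lemma odd_walk_cycle : ∀ (L : ℕ) {v : V} (w : G.Walk v v), w.length = L → Odd L →
    ∃ (u : V) (c : G.Walk u u), c.IsCycle ∧ Odd c.length ∧ c.length ≤ L := by
  intro L
  induction L using Nat.strong_induction_on with
  | _ L IH =>
  intro v w hw hodd
  cases w with
  | nil => rw [Walk.length_nil] at hw; subst hw; exact absurd hodd (by decide)
  | @cons _ y _ h rest =>
    by_cases hnd : rest.support.Nodup
    · by_cases he : s(v, y) ∈ rest.edges
      · have h1 : rest.length = 1 := path_edge_aux (Walk.IsPath.mk' hnd) he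
        rw [Walk.length_cons, h1] at hw
        subst hw
        exact absurd hodd (by decide)
      · refine ⟨v, Walk.cons h rest, ?_, ?_, ?_⟩
        · exact (Walk.cons_isCycle_iff rest h).mpr ⟨Walk.IsPath.mk' hnd, he⟩
        · rw [hw]; exact hodd
        · rw [hw]
    · obtain ⟨x, hx⟩ := List.exists_duplicate_iff_not_nodup.mpr hnd
      have hx1 : x ∈ rest.support := hx.mem
      have hcnt : 2 ≤ rest.support.count x := List.duplicate_iff_two_le_count.mp hx
      have hspec := rest.take_spec hx1
      have hsupp : rest.support = (rest.takeUntil x hx1).support ++ (rest.dropUntil x hx1).support.tail := by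
        conv_lhs => rw [← hspec]
        exact Walk.support_append _ _
      have hcnt1 : (rest.takeUntil x hx1).support.count x = 1 :=
        rest.count_support_takeUntil_eq_one hx1
      have hx2 : x ∈ (rest.dropUntil x hx1).support.tail := by
        rw [← List.count_pos_iff]
        rw [hsupp, List.count_append, hcnt1] at hcnt
        omega
      set q2 := rest.dropUntil x hx1 with hq2
      cases hq2c : q2 with
      | nil => rw [hq2c] at hx2; simp at hx2
      | @cons _ z _ h2 q3 =>
        rw [hq2c] at hx2
        rw [Walk.support_cons, List.tail_cons] at hx2
        have hspec3 := q3.take_spec hx2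
        have hlen3 : q3.length = (q3.takeUntil x hx2).length + (q3.dropUntil x hx2).length := by
          conv_lhs => rw [← hspec3]
          exact Walk.length_append _ _
        have hlrest : rest.length = (rest.takeUntil x hx1).length + q2.length := by
          conv_lhs => rw [← hspec]
          exact Walk.length_append _ _
        set c1 : G.Walk x x := Walk.cons h2 (q3.takeUntil x hx2) with hc1
        set c2 : G.Walk x x := (q3.dropUntil x hx2).append (Walk.cons h (rest.takeUntil x hx1)) with hc2
        have hl1 : c1.length = (q3.takeUntil x hx2).length + 1 := by simp [hc1]
        have hl2 : c2.length = (q3.dropUntil x hx2).length + ((rest.takeUntil x hx1).length + 1) := by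
          simp [hc2]
        have hq2len : q2.length = q3.length + 1 := by rw [hq2c]; simp
        have hLsum : c1.length + c2.length = L := by
          rw [hl1, hl2, ← hw, Walk.length_cons, hlrest, hq2len, hlen3]; ring
        have hodd' : Odd c1.length ∨ Odd c2.length := by
          rw [Nat.odd_iff] at hodd ⊢
          rw [Nat.odd_iff]
          omega
        have hc1pos : 1 ≤ c1.length := by rw [hl1]; omega
        have hc2pos : 1 ≤ c2.length := by rw [hl2]; omega
        rcases hodd' with ho | ho
        · obtain ⟨u, c, hc, hco, hcl⟩ := IH c1.length (by omega) c1 rfl ho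
          exact ⟨u, c, hc, hco, by omega⟩
        · obtain ⟨u, c, hc, hco, hcl⟩ := IH c2.length (by omega) c2 rfl ho
          exact ⟨u, c, hc, hco, by omega⟩


open SimpleGraph Walk


lemma exists_hom_to_cycle {V : Type*} [DecidableEq V] (G : SimpleGraph V)
    (k : ℕ) (hk : 1 ≤ k)
    (hshort : ∀ (v : V) (w : G.Walk v v), Odd w.length → 2*k+1 ≤ w.length)
    (v_p : V) (hbip : (Gdel G {v_p}).Colorable 2) :
    ∃ φ : V → ZMod (2*k+1), ∀ ⦃u w : V⦄, G.Adj u w → φ w = φ u + 1 ∨ φ w = φ u - 1 := by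
  classical
  obtain ⟨C⟩ := hbip
  set cv : V → ℕ := fun u => (C u).val with hcv
  set φ : V → ZMod (2*k+1) := fun u =>
    if G.Reachable v_p u ∧ G.dist v_p u < k
    then (-1)^(cv u + G.dist v_p u) * ((G.dist v_p u : ℕ) : ZMod (2*k+1))
    else (-1)^(cv u + k) * (k : ZMod (2*k+1)) with hφ
  have φnear : ∀ x, G.Reachable v_p x → G.dist v_p x < k →
      φ x = (-1)^(cv x + G.dist v_p x) * ((G.dist v_p x : ℕ) : ZMod (2*k+1)) := by
    intro x hx hxk
    simp only [hφ]
    rw [if_pos (show G.Reachable v_p x ∧ G.dist v_p x < k from ⟨hx, hxk⟩)]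
  have φfar : ∀ x, ¬ (G.Reachable v_p x ∧ G.dist v_p x < k) →
      φ x = (-1)^(cv x + k) * (k : ZMod (2*k+1)) := by
    intro x hx
    simp only [hφ]
    rw [if_neg hx]
  refine ⟨φ, ?_⟩
  have hn0 : ((k : ZMod (2*k+1)) * 2 + 1) = 0 := by
    have := ZMod.natCast_self (2*k+1)
    push_cast at this
    linear_combination this
  have hsgn : ∀ u w, G.Adj u w → u ≠ v_p → w ≠ v_p → (cv u + cv w) % 2 = 1 := by
    intro u w h hu hw
    have hadj : (Gdel G {v_p}).Adj u w := by
      refine ⟨h.ne, Or.inl ⟨h, ?_, ?_⟩⟩ <;> simpa using ‹_›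
    have hne := C.valid hadj
    have h1 : (C u).val < 2 := (C u).isLt
    have h2 : (C w).val < 2 := (C w).isLt
    have h3 : (C u).val ≠ (C w).val := fun hh => hne (Fin.ext hh)
    simp only [hcv]
    omega
  have farfar : ∀ u w, (cv u + cv w) % 2 = 1 →
      ((-1 : ZMod (2*k+1))^(cv w + k) * k = (-1)^(cv u + k) * k + 1 ∨
       (-1 : ZMod (2*k+1))^(cv w + k) * k = (-1)^(cv u + k) * k - 1) := by
    intro u w hs
    rcases Nat.even_or_odd (cv u + k) with he | he
    · have ho : Odd (cv w + k) := by
        rw [Nat.even_iff] at he; rw [Nat.odd_iff]; omega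
      rw [he.neg_one_pow, ho.neg_one_pow]
      left; linear_combination -hn0
    · have he2 : Even (cv w + k) := by
        rw [Nat.odd_iff] at he; rw [Nat.even_iff]; omega
      rw [he.neg_one_pow, he2.neg_one_pow]
      right; linear_combination hn0
  suffices key : ∀ u w, G.Adj u w → G.dist v_p u ≤ G.dist v_p w →
      (φ w = φ u + 1 ∨ φ w = φ u - 1) by
    intro u w h
    rcases le_total (G.dist v_p u) (G.dist v_p w) with hle | hle
    · exact key u w h hle
    · rcases key w u h.symm hle with h1 | h1
      · right; rw [h1]; ring
      · left; rw [h1]; ring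
  intro u w hadj hle
  by_cases hr : G.Reachable v_p u
  · have hrw : G.Reachable v_p w := hr.trans hadj.reachable
    obtain ⟨p, hp⟩ := hr.exists_walk_length_eq_dist
    have hdw_le : G.dist v_p w ≤ G.dist v_p u + 1 := by
      have := SimpleGraph.dist_le (p.concat hadj)
      simpa [hp] using this
    rcases (by omega : G.dist v_p w = G.dist v_p u ∨ G.dist v_p w = G.dist v_p u + 1) with
      hdd | hdd
    · -- equal distances
      by_cases hu0 : G.dist v_p u = 0
      · exfalso
        have hu' : v_p = u := (hr.dist_eq_zero_iff).mp hu0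
        have hw' : v_p = w := (hrw.dist_eq_zero_iff).mp (by omega)
        exact hadj.ne (hu'.symm.trans hw')
      · have hne_u : u ≠ v_p := by
          rintro rfl
          simp [SimpleGraph.dist_self] at hu0
        have hne_w : w ≠ v_p := by
          rintro rfl
          rw [SimpleGraph.dist_self] at hdd
          omega
        have hdk : k ≤ G.dist v_p u := by
          by_contra hlt
          obtain ⟨q, hq⟩ := hrw.exists_walk_length_eq_dist
          have hodd : Odd ((p.concat hadj).append q.reverse).length := by
            rw [Walk.length_append, Walk.length_concat, Walk.length_reverse, hp, hq]
            rw [Nat.odd_iff]; omega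
          have := hshort _ _ hodd
          rw [Walk.length_append, Walk.length_concat, Walk.length_reverse, hp, hq] at this
          omega
        rw [φfar u (by rintro ⟨-, hh⟩; omega), φfar w (by rintro ⟨-, hh⟩; omega)]
        exact farfar u w (hsgn u w hadj hne_u hne_w)
    · -- d w = d u + 1
      by_cases hu0 : u = v_p
      · have hdu : G.dist v_p u = 0 := by rw [hu0, SimpleGraph.dist_self]
        have hdw : G.dist v_p w = 1 := by omega
        have hφu : φ u = 0 := by
          rw [φnear u hr (by omega), hdu]
          simp
        rw [hφu]
        by_cases hkw : G.dist v_p w < k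
        · rw [φnear w hrw hkw, hdw]
          rcases Nat.even_or_odd (cv w + 1) with he | he
          · left; rw [he.neg_one_pow]; push_cast; ring
          · right; rw [he.neg_one_pow]; push_cast; ring
        · have hk1 : k = 1 := by omega
          rw [φfar w (by rintro ⟨-, hh⟩; omega)]
          rcases Nat.even_or_odd (cv w + k) with he | he
          · left; rw [he.neg_one_pow, hk1]; push_cast; ring
          · right; rw [he.neg_one_pow, hk1]; push_cast; ring
      · have hne_w : w ≠ v_p := by
          rintro rfl
          rw [SimpleGraph.dist_self] at hdd
          omega
        have hs := hsgn u w hadj hu0 hne_w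
        by_cases hku : G.dist v_p u < k
        · have hφw : φ w = (-1)^(cv w + G.dist v_p w) * ((G.dist v_p w : ℕ) : ZMod (2*k+1)) := by
            by_cases hkw : G.dist v_p w < k
            · exact φnear w hrw hkw
            · have hwk : G.dist v_p w = k := by omega
              rw [φfar w (by rintro ⟨-, hh⟩; omega), hwk]
          rw [hφw, φnear u hr hku, hdd]
          rcases Nat.even_or_odd (cv u + G.dist v_p u) with he | he
          · have ho : Even (cv w + (G.dist v_p u + 1)) := by
              rw [Nat.even_iff] at he ⊢; omega
            rw [he.neg_one_pow, ho.neg_one_pow]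
            left; push_cast; ring
          · have ho : Odd (cv w + (G.dist v_p u + 1)) := by
              rw [Nat.odd_iff] at he ⊢; omega
            rw [he.neg_one_pow, ho.neg_one_pow]
            right; push_cast; ring
        · rw [φfar u (by rintro ⟨-, hh⟩; omega), φfar w (by rintro ⟨-, hh⟩; omega)]
          exact farfar u w hs
  · have hrw : ¬ G.Reachable v_p w := fun hh => hr (hh.trans hadj.reachable.symm)
    have hne_u : u ≠ v_p := by rintro rfl; exact hr (Reachable.refl _)
    have hne_w : w ≠ v_p := by rintro rfl; exact hrw (Reachable.refl _)
    rw [φfar u (by rintro ⟨hh, -⟩; exact hr hh), φfar w (by rintro ⟨hh, -⟩; exact hrw hh)]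
    exact farfar u w (hsgn u w hadj hne_u hne_w)




lemma upper_mem {V : Type*} [Fintype V] [DecidableEq V] (G : SimpleGraph V) (k : ℕ) (hk : 1 ≤ k)
    (φ : V → ZMod (2*k+1)) (hφ : ∀ ⦃u w : V⦄, G.Adj u w → φ w = φ u + 1 ∨ φ w = φ u - 1) :
    ∃ y : Finset V → ℝ, (∀ I, 0 ≤ y I) ∧ (∀ I, ¬ IsIndep G I → y I = 0) ∧
    (∀ v : V, 1 ≤ ∑ I : Finset V, if v ∈ I then y I else 0) ∧
    ∑ I : Finset V, y I = (2*k+1 : ℝ)/k := by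
  classical
  haveI : NeZero (2*k+1) := ⟨by omega⟩
  have hkR : (0:ℝ) < k := by exact_mod_cast hk
  -- cast cancellation helper
  have hval : ∀ a b : ℕ, a < 2*k+1 → b < 2*k+1 → ((a : ZMod (2*k+1)) = b) → a = b := by
    intro a b ha hb h
    have := congrArg ZMod.val h
    rwa [ZMod.val_cast_of_lt ha, ZMod.val_cast_of_lt hb] at this
  set J : ZMod (2*k+1) → Finset V := fun j => univ.filter (fun v => ∃ t, t < k ∧ φ v = j + (2*t : ℕ)) with hJ
  have hJindep : ∀ j, IsIndep G (J j) := by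
    intro j u hu w hw hadj
    simp only [hJ, mem_filter] at hu hw
    obtain ⟨-, t, ht, hφu⟩ := hu
    obtain ⟨-, s, hs, hφw⟩ := hw
    rcases hφ hadj with h1 | h1
    · have h2 : ((2*s : ℕ) : ZMod (2*k+1)) = ((2*t+1 : ℕ) : ZMod (2*k+1)) := by
        rw [hφu, hφw] at h1
        push_cast at h1 ⊢
        linear_combination h1
      have := hval _ _ (by omega) (by omega) h2
      omega
    · have h2 : ((2*t : ℕ) : ZMod (2*k+1)) = ((2*s+1 : ℕ) : ZMod (2*k+1)) := by
        rw [hφu, hφw] at h1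
        push_cast at h1 ⊢
        linear_combination -h1
      have := hval _ _ (by omega) (by omega) h2
      omega
  set y : Finset V → ℝ := fun I => ((univ.filter (fun j : ZMod (2*k+1) => J j = I)).card : ℝ) / k
    with hy
  refine ⟨y, ?_, ?_, ?_, ?_⟩
  · intro I
    apply div_nonneg _ hkR.le
    positivity
  · intro I hI
    have : (univ.filter (fun j : ZMod (2*k+1) => J j = I)) = ∅ := by
      rw [filter_eq_empty_iff]
      intro j _ hj
      exact hI (hj ▸ hJindep j)
    simp [hy, this]
  · intro v
    have hcard : (univ.filter (fun j : ZMod (2*k+1) => v ∈ J j)).card = k := by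
      have hseteq : univ.filter (fun j : ZMod (2*k+1) => v ∈ J j)
          = (Finset.range k).image (fun t : ℕ => φ v - (2*t : ℕ)) := by
        ext j
        simp only [mem_filter, mem_univ, true_and, mem_image, Finset.mem_range, hJ]
        constructor
        · rintro ⟨t, ht, hφv⟩
          exact ⟨t, ht, by rw [hφv]; ring⟩
        · rintro ⟨t, ht, hj⟩
          exact ⟨t, ht, by rw [← hj]; ring⟩
      rw [hseteq, Finset.card_image_of_injOn, Finset.card_range]
      intro t ht s hs h
      simp only [Finset.coe_range, Set.mem_Iio] at ht hs
      have h2 : ((2*t : ℕ) : ZMod (2*k+1)) = ((2*s : ℕ) : ZMod (2*k+1)) := by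
        push_cast
        push_cast at h
        linear_combination -h
      have := hval _ _ (by omega) (by omega) h2
      omega
    have hyI : ∀ I : Finset V, (if v ∈ I then y I else 0)
        = ∑ j : ZMod (2*k+1), (if J j = I then (if v ∈ I then (1:ℝ)/k else 0) else 0) := by
      intro I
      by_cases hv : v ∈ I
      · simp only [if_pos hv, hy]
        rw [← Finset.sum_boole]
        rw [Finset.sum_div]
        congr 1
        ext j
        by_cases hj : J j = I <;> simp [hj]
      · simp [hv]
    have hswap : ∑ I : Finset V, (if v ∈ I then y I else 0)
        = ∑ j : ZMod (2*k+1), (if v ∈ J j then (1:ℝ)/k else 0) := by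
      rw [Finset.sum_congr rfl (fun I _ => hyI I), Finset.sum_comm]
      refine Finset.sum_congr rfl (fun j _ => ?_)
      rw [Finset.sum_ite_eq]
      simp
    rw [hswap, Finset.sum_ite, Finset.sum_const, Finset.sum_const]
    simp only [smul_zero, add_zero, nsmul_eq_mul, hcard]
    rw [mul_one_div, div_self (by positivity)]
  · have hfib : (Finset.univ : Finset (ZMod (2*k+1))).card
        = ∑ I : Finset V, (univ.filter (fun j : ZMod (2*k+1) => J j = I)).card :=
      Finset.card_eq_sum_card_fiberwise (fun x _ => mem_univ _)
    simp only [hy]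
    rw [← Finset.sum_div]
    rw [← Nat.cast_sum, ← hfib, Finset.card_univ, ZMod.card]
    push_cast
    ring




lemma lower_bound {V : Type*} [Fintype V] [DecidableEq V] (G : SimpleGraph V) (k : ℕ)
    (hk : 1 ≤ k) {v0 : V} (cyc : G.Walk v0 v0) (hcyc : cyc.IsCycle)
    (hlen : cyc.length = 2*k+1)
    (y : Finset V → ℝ) (h0 : ∀ I, 0 ≤ y I) (hind : ∀ I, ¬ IsIndep G I → y I = 0)
    (hcov : ∀ v : V, 1 ≤ ∑ I : Finset V, if v ∈ I then y I else 0) :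
    (2*k+1 : ℝ)/k ≤ ∑ I : Finset V, y I := by
  classical
  set l := cyc.support.tail with hl
  have hlength : l.length = 2*k+1 := by
    rw [hl, List.length_tail, SimpleGraph.Walk.length_support, hlen]
    omega
  have hnodup : l.Nodup := hcyc.support_nodup
  have hlpos : l ≠ [] := by
    intro h; rw [h] at hlength; simp at hlength
  set f : Fin (2*k+1) → V := fun i => l.get (Fin.cast hlength.symm i) with hf
  have hinj : Function.Injective f := by
    intro i j hij
    have := List.nodup_iff_injective_get.mp hnodup hij
    exact Fin.cast_injective _ this
  have hchain : List.Chain' G.Adj (v0 :: l) := by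
    have := cyc.isChain_adj_support
    rwa [cyc.support_eq_cons] at this
  have hchain' : ∀ (i : ℕ) (h : i < (v0 :: l).length - 1), G.Adj ((v0 :: l).get ⟨i, by omega⟩)
      ((v0 :: l).get ⟨i+1, by omega⟩) := fun i h => List.isChain_iff_getElem.mp hchain i (by omega)
  have hcons : ∀ (i : ℕ) (h : i < l.length), (v0 :: l).get ⟨i+1, by simpa using h⟩
      = l.get ⟨i, h⟩ := by
    intro i h; rfl
  have hadj_nat : ∀ (i : ℕ) (h : i + 1 < l.length),
      G.Adj (l.get ⟨i, by omega⟩) (l.get ⟨i+1, h⟩) := by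
    intro i h
    have := hchain' (i+1) (by simp; omega)
    rwa [hcons i (by omega), hcons (i+1) h] at this
  have hlast : l.get ⟨2*k, by rw [hlength]; omega⟩ = v0 := by
    have h1 : cyc.support.getLast cyc.support_ne_nil = v0 := cyc.getLast_support
    have h3 : cyc.support.getLast cyc.support_ne_nil = l.getLast hlpos := by
      calc cyc.support.getLast cyc.support_ne_nil
          = (v0 :: l).getLast (List.cons_ne_nil _ _) :=
            List.getLast_congr _ _ cyc.support_eq_cons
        _ = l.getLast hlpos := List.getLast_cons hlpos
    have h6 : l.getLast hlpos = v0 := h3 ▸ h1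
    rw [List.getLast_eq_getElem] at h6
    simp only [List.get_eq_getElem]
    convert h6 using 2
    omega
  have hfirst : G.Adj v0 (l.get ⟨0, by rw [hlength]; omega⟩) := by
    have := hchain' 0 (by rw [List.length_cons, hlength]; omega)
    rwa [hcons 0 (by rw [hlength]; omega)] at this
  set g : Fin (2*k+1) → Fin (2*k+1) :=
    fun i => ⟨((i : ℕ) + 1) % (2*k+1), Nat.mod_lt _ (by omega)⟩ with hg
  have hgval : ∀ i : Fin (2*k+1), ((i:ℕ) < 2*k ∧ (g i : ℕ) = (i:ℕ)+1)
      ∨ ((i:ℕ) = 2*k ∧ (g i : ℕ) = 0) := by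
    intro i
    have hi := i.isLt
    rcases Nat.lt_or_ge (i : ℕ) (2*k) with h | h
    · left
      refine ⟨h, ?_⟩
      simp only [hg]
      rw [Nat.mod_eq_of_lt (by omega)]
    · right
      have h2 : (i:ℕ) = 2*k := by omega
      refine ⟨h2, ?_⟩
      simp only [hg, h2]
      rw [Nat.mod_self]
  have hginj : Function.Injective g := by
    intro i j hij
    have h1 := hgval i; have h2 := hgval j
    have h3 : (g i : ℕ) = (g j : ℕ) := by rw [hij]
    apply Fin.ext
    rcases h1 with ⟨h1a, h1b⟩ | ⟨h1a, h1b⟩ <;> rcases h2 with ⟨h2a, h2b⟩ | ⟨h2a, h2b⟩ <;> omega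
  have hadjf : ∀ i : Fin (2*k+1), G.Adj (f i) (f (g i)) := by
    intro i
    rcases hgval i with ⟨h1, h2⟩ | ⟨h1, h2⟩
    · have ha : f (g i) = l.get ⟨(i:ℕ)+1, by rw [hlength]; omega⟩ := by
        simp only [hf]
        congr 1
        exact Fin.ext h2
      have hb : f i = l.get ⟨(i:ℕ), by rw [hlength]; omega⟩ := rfl
      rw [ha, hb]
      exact hadj_nat (i:ℕ) (by rw [hlength]; omega)
    · have hfi : f i = v0 := by
        have hc : f i = l.get ⟨2*k, by rw [hlength]; omega⟩ := by
          simp only [hf]; congr 1; exact Fin.ext (by simpa using h1)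
        rw [hc, hlast]
      have hfgi : f (g i) = l.get ⟨0, by rw [hlength]; omega⟩ := by
        simp only [hf]; congr 1; exact Fin.ext (by simpa using h2)
      rw [hfi, hfgi]
      exact hfirst
  -- counting lemma
  have key : ∀ I : Finset V, IsIndep G I →
      ((univ.filter (fun i : Fin (2*k+1) => f i ∈ I)).card ≤ k) := by
    intro I hI
    set A := univ.filter (fun i : Fin (2*k+1) => f i ∈ I) with hA
    have hdisj : Disjoint A (A.image g) := by
      rw [Finset.disjoint_left]
      intro j hj hj'
      obtain ⟨i, hi, hij⟩ := Finset.mem_image.mp hj'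
      rw [hA, mem_filter] at hj hi
      exact hI hi.2 (hij ▸ hj).2 (hij ▸ hadjf i)
    have hcard_img : (A.image g).card = A.card := Finset.card_image_of_injective _ hginj
    have hunion : (A ∪ A.image g).card = A.card + A.card := by
      rw [Finset.card_union_of_disjoint hdisj, hcard_img]
    have hle : (A ∪ A.image g).card ≤ 2*k+1 := by
      have := Finset.card_le_univ (A ∪ A.image g)
      simpa [Fintype.card_fin] using this
    omega
  -- main chain
  have h1 : (2*k+1 : ℝ) ≤ ∑ i : Fin (2*k+1), ∑ I : Finset V, (if f i ∈ I then y I else 0) := by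
    calc (2*k+1 : ℝ) = ∑ _i : Fin (2*k+1), (1:ℝ) := by
          rw [Finset.sum_const, Finset.card_univ, Fintype.card_fin, nsmul_eq_mul, mul_one]
          push_cast; ring
      _ ≤ _ := Finset.sum_le_sum (fun i _ => hcov (f i))
  have h2 : ∑ i : Fin (2*k+1), ∑ I : Finset V, (if f i ∈ I then y I else 0)
      = ∑ I : Finset V, y I * ((univ.filter (fun i : Fin (2*k+1) => f i ∈ I)).card : ℝ) := by
    rw [Finset.sum_comm]
    refine Finset.sum_congr rfl (fun I _ => ?_)
    rw [Finset.sum_ite, Finset.sum_const, Finset.sum_const]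
    simp [mul_comm]
  have h3 : ∑ I : Finset V, y I * ((univ.filter (fun i : Fin (2*k+1) => f i ∈ I)).card : ℝ)
      ≤ ∑ I : Finset V, y I * k := by
    refine Finset.sum_le_sum (fun I _ => ?_)
    by_cases hI : IsIndep G I
    · exact mul_le_mul_of_nonneg_left (by exact_mod_cast key I hI) (h0 I)
    · rw [hind I hI]; simp
  have h4 : (2*k+1 : ℝ) ≤ (∑ I : Finset V, y I) * k := by
    calc (2*k+1:ℝ) ≤ _ := h1
      _ = _ := h2
      _ ≤ _ := h3
      _ = (∑ I : Finset V, y I) * k := by rw [← Finset.sum_mul]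
  rw [div_le_iff₀ (by positivity)]
  exact h4

end AuxProof

/-- if removing one vertex bipartizes `G` and `G` has odd girth `2ρ-1`,
then the fractional chromatic number of `G` equals `2 + 1/(ρ-1)`. -/
theorem fracChrom_one_vertex_bipartize {V : Type*} [Fintype V] [DecidableEq V]
    (G : SimpleGraph V) (hnb : ¬ G.Colorable 2)
    (ρ : ℕ) (hρ : 2 ≤ ρ) (hog : HasOddGirth G (2 * ρ - 1))
    (v_p : V) (hbip : (Gdel G {v_p}).Colorable 2) :
    fracChrom G = 2 + 1 / ((ρ : ℝ) - 1) := by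
  classical
  obtain ⟨hoddn, ⟨v0, cyc, hcyc, hclen⟩, hmin⟩ := hog
  set k := ρ - 1 with hkdef
  have hk : 1 ≤ k := by omega
  have hn : 2 * ρ - 1 = 2*k+1 := by omega
  have hshort : ∀ (v : V) (w : G.Walk v v), Odd w.length → 2*k+1 ≤ w.length := by
    intro v w hw
    obtain ⟨u, c, hc, hco, hcl⟩ := odd_walk_cycle w.length w rfl hw
    have := hmin u c hc hco
    omega
  obtain ⟨φ, hφ⟩ := exists_hom_to_cycle G k hk hshort v_p hbip
  obtain ⟨y, hy0, hyind, hycov, hytot⟩ := upper_mem G k hk φ hφ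
  set S : Set ℝ := {t : ℝ | ∃ y : Finset V → ℝ, (∀ I, 0 ≤ y I) ∧
    (∀ I, ¬ IsIndep G I → y I = 0) ∧
    (∀ v : V, 1 ≤ ∑ I : Finset V, if v ∈ I then y I else 0) ∧
    t = ∑ I : Finset V, y I} with hS
  have hmem : (2*k+1 : ℝ)/k ∈ S := ⟨y, hy0, hyind, hycov, hytot.symm⟩
  have hlb : ∀ t ∈ S, (2*k+1 : ℝ)/k ≤ t := by
    rintro t ⟨z, hz0, hzind, hzcov, rfl⟩
    exact lower_bound G k hk cyc hcyc (by omega) z hz0 hzind hzcov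
  have hval : fracChrom G = (2*k+1 : ℝ)/k := by
    have : fracChrom G = sInf S := rfl
    rw [this]
    exact le_antisymm (csInf_le ⟨_, fun t ht => hlb t ht⟩ hmem) (le_csInf ⟨_, hmem⟩ hlb)
  rw [hval]
  have hkR : (k : ℝ) = (ρ : ℝ) - 1 := by
    rw [hkdef]
    push_cast [Nat.cast_sub (by omega : 1 ≤ ρ)]
    ring
  have hkne : (k : ℝ) ≠ 0 := by
    have : (1:ℝ) ≤ (k:ℝ) := by exact_mod_cast hk
    linarith
  rw [← hkR]
  field_simp
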